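/- Kronecker-product additivity with one pure factor: let α = |ψ⟩⟨ψ| be a pure k-UDA state on ⊗_{i=1}^n H_{A_i} and β a k-UDA state on ⊗_{i=1}^n H_{B_i}. Regard α ⊗_K β as an n-partite state on ⊗_{i=1}^n (H_{A_i} ⊗ H_{B_i}) with i-th party (A_i B_i). Then α ⊗_K β is k-UDA with respect to this n-party structure: any density operator on ⊗_{i=1}^n (H_{A_i} ⊗ H_{B_i}) sharing all k-partite marginals (over the combined parties (A_i B_i)) of α ⊗_K β equals α ⊗_K β. -/

import Mathlib

open scoped BigOperators ComplexOrder

abbrev Idx {ι : Type} (κ : ι → Type) : Type := ∀ i, κ i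

def IsDensity {α : Type} [Fintype α] (M : Matrix α α ℂ) : Prop :=
  M.PosSemidef ∧ M.trace = 1

def pureState {α : Type} (ψ : α → ℂ) : Matrix α α ℂ :=
  fun a b => ψ a * star (ψ b)

noncomputable def ptrace {ι : Type} [Fintype ι] [DecidableEq ι] (κ : ι → Type)
    [∀ i, Fintype (κ i)] (S : Finset ι) (M : Matrix (Idx κ) (Idx κ) ℂ) :
    Matrix (∀ i : {i // i ∈ S}, κ i) (∀ i : {i // i ∈ S}, κ i) ℂ :=
  fun a b => ∑ c : ∀ i : {i // i ∉ S}, κ i,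
    M (fun i => if h : i ∈ S then a ⟨i, h⟩ else c ⟨i, h⟩)
      (fun i => if h : i ∈ S then b ⟨i, h⟩ else c ⟨i, h⟩)

def IsUDA {ι : Type} [Fintype ι] [DecidableEq ι] (κ : ι → Type)
    [∀ i, Fintype (κ i)] (k : ℕ) (ρ : Matrix (Idx κ) (Idx κ) ℂ) : Prop :=
  ∀ σ : Matrix (Idx κ) (Idx κ) ℂ, IsDensity σ →
    (∀ S : Finset ι, S.card = k → ptrace κ S σ = ptrace κ S ρ) → σ = ρ

def kronProd {ι : Type} {κA κB : ι → Type}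
    (ρ : Matrix (Idx κA) (Idx κA) ℂ) (σ : Matrix (Idx κB) (Idx κB) ℂ) :
    Matrix (Idx fun i => κA i × κB i) (Idx fun i => κA i × κB i) ℂ :=
  fun a b => ρ (fun i => (a i).1) (fun i => (b i).1) *
             σ (fun i => (a i).2) (fun i => (b i).2)


-- pairing
def pairD {ι : Type} {κ1 κ2 : ι → Type} (x : ∀ i, κ1 i) (y : ∀ i, κ2 i) :
    ∀ i, κ1 i × κ2 i := fun i => (x i, y i)

def pairEquiv {ι : Type} (κ1 κ2 : ι → Type) :
    (∀ i, κ1 i × κ2 i) ≃ (∀ i, κ1 i) × (∀ i, κ2 i) where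
  toFun p := (fun i => (p i).1, fun i => (p i).2)
  invFun q := pairD q.1 q.2
  left_inv p := rfl
  right_inv q := rfl

lemma sum_pairD {ι : Type} [Fintype ι] [DecidableEq ι] {κ1 κ2 : ι → Type}
    [∀ i, Fintype (κ1 i)] [∀ i, Fintype (κ2 i)] (f : (∀ i, κ1 i × κ2 i) → ℂ) :
    ∑ p, f p = ∑ x, ∑ y, f (pairD x y) :=
  (Fintype.sum_equiv (pairEquiv κ1 κ2)
      _ (fun q => f (pairD q.1 q.2)) (fun p => rfl)).trans
    (Fintype.sum_prod_type (f := fun q => f (pairD q.1 q.2)))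

-- gluing
def glue {ι : Type} [DecidableEq ι] {κ : ι → Type} (S : Finset ι)
    (a : ∀ i : {i // i ∈ S}, κ i) (c : ∀ i : {i // i ∉ S}, κ i) : ∀ i, κ i :=
  fun i => if h : i ∈ S then a ⟨i, h⟩ else c ⟨i, h⟩

lemma sum_glue {ι : Type} [Fintype ι] [DecidableEq ι] {κ : ι → Type}
    [∀ i, Fintype (κ i)] (S : Finset ι) (f : (∀ i, κ i) → ℂ) :
    ∑ x, f x = ∑ a : ∀ i : {i // i ∈ S}, κ i, ∑ c : ∀ i : {i // i ∉ S}, κ i,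
      f (glue S a c) := by
  refine Eq.trans (Fintype.sum_equiv (Equiv.piEquivPiSubtypeProd (· ∈ S) κ)
      _ (fun q => f (glue S q.1 q.2)) (fun x => ?_))
    (Fintype.sum_prod_type (f := fun q => f (glue S q.1 q.2)))
  congr 1
  funext i
  by_cases h : i ∈ S <;> simp [glue, Equiv.piEquivPiSubtypeProd, h]

lemma glue_pairD {ι : Type} [DecidableEq ι] {κ1 κ2 : ι → Type} (S : Finset ι)
    (a : ∀ i : {i // i ∈ S}, κ1 i) (b : ∀ i : {i // i ∈ S}, κ2 i)
    (cA : ∀ i : {i // i ∉ S}, κ1 i) (cB : ∀ i : {i // i ∉ S}, κ2 i) :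
    glue (κ := fun i => κ1 i × κ2 i) S (pairD a b) (pairD cA cB)
      = pairD (glue S a cA) (glue S b cB) := by
  funext i
  by_cases h : i ∈ S <;> simp [glue, pairD, h]

section Aux

variable {ι : Type} [Fintype ι] [DecidableEq ι] {κ1 κ2 : ι → Type}
  [∀ i, Fintype (κ1 i)] [∀ i, Fintype (κ2 i)]

lemma pairD_fst (x : ∀ i, κ1 i) (y : ∀ i, κ2 i) :
    (fun i => ((pairD x y) i).1) = x := rfl

lemma pairD_snd (x : ∀ i, κ1 i) (y : ∀ i, κ2 i) :
    (fun i => ((pairD x y) i).2) = y := rfl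

lemma kronProd_pairD (ρ : Matrix (Idx κ1) (Idx κ1) ℂ) (μ : Matrix (Idx κ2) (Idx κ2) ℂ)
    (x x' : Idx κ1) (y y' : Idx κ2) :
    kronProd ρ μ (pairD x y) (pairD x' y') = ρ x x' * μ y y' := rfl

lemma ptrace_apply (κ : ι → Type) [∀ i, Fintype (κ i)] (S : Finset ι)
    (M : Matrix (Idx κ) (Idx κ) ℂ) (a b : ∀ i : {i // i ∈ S}, κ i) :
    ptrace κ S M a b = ∑ c : ∀ i : {i // i ∉ S}, κ i,
      M (glue S a c) (glue S b c) := rfl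

/-- trace over the second factors -/
noncomputable def trB (M : Matrix (Idx fun i => κ1 i × κ2 i) (Idx fun i => κ1 i × κ2 i) ℂ) :
    Matrix (Idx κ1) (Idx κ1) ℂ :=
  fun a a' => ∑ b, M (pairD a b) (pairD a' b)

lemma ptrace_trB (S : Finset ι)
    (M : Matrix (Idx fun i => κ1 i × κ2 i) (Idx fun i => κ1 i × κ2 i) ℂ)
    (aS a'S : ∀ i : {i // i ∈ S}, κ1 i) :
    ptrace κ1 S (trB M) aS a'S
      = ∑ bS : ∀ i : {i // i ∈ S}, κ2 i,
          ptrace (fun i => κ1 i × κ2 i) S M (pairD aS bS) (pairD a'S bS) := by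
  have L : ptrace κ1 S (trB M) aS a'S
      = ∑ cA : ∀ i : {i // i ∉ S}, κ1 i, ∑ bS : ∀ i : {i // i ∈ S}, κ2 i,
          ∑ cB : ∀ i : {i // i ∉ S}, κ2 i,
          M (pairD (glue S aS cA) (glue S bS cB)) (pairD (glue S a'S cA) (glue S bS cB)) := by
    refine Finset.sum_congr rfl (fun cA _ => ?_)
    exact sum_glue S (fun b => M (pairD (glue S aS cA) b) (pairD (glue S a'S cA) b))
  have R : (∑ bS : ∀ i : {i // i ∈ S}, κ2 i,
        ptrace (fun i => κ1 i × κ2 i) S M (pairD aS bS) (pairD a'S bS))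
      = ∑ bS : ∀ i : {i // i ∈ S}, κ2 i, ∑ cA : ∀ i : {i // i ∉ S}, κ1 i,
          ∑ cB : ∀ i : {i // i ∉ S}, κ2 i,
          M (pairD (glue S aS cA) (glue S bS cB)) (pairD (glue S a'S cA) (glue S bS cB)) := by
    refine Finset.sum_congr rfl (fun bS _ => ?_)
    rw [ptrace_apply, sum_pairD
      (fun c => M (glue S (pairD aS bS) c) (glue S (pairD a'S bS) c))]
    simp only [glue_pairD]
  rw [L, R, Finset.sum_comm]

lemma kron_ptrace (S : Finset ι) (ρ : Matrix (Idx κ1) (Idx κ1) ℂ)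
    (μ : Matrix (Idx κ2) (Idx κ2) ℂ)
    (aS a'S : ∀ i : {i // i ∈ S}, κ1 i) (bS b'S : ∀ i : {i // i ∈ S}, κ2 i) :
    ptrace (fun i => κ1 i × κ2 i) S (kronProd ρ μ) (pairD aS bS) (pairD a'S b'S)
      = ptrace κ1 S ρ aS a'S * ptrace κ2 S μ bS b'S := by
  rw [ptrace_apply, sum_pairD
    (fun c => kronProd ρ μ (glue S (pairD aS bS) c) (glue S (pairD a'S b'S) c))]
  simp only [glue_pairD, kronProd_pairD]
  rw [ptrace_apply, ptrace_apply, Finset.sum_mul_sum]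

lemma trace_ptrace (κ : ι → Type) [∀ i, Fintype (κ i)] (S : Finset ι)
    (M : Matrix (Idx κ) (Idx κ) ℂ) :
    ∑ aS : ∀ i : {i // i ∈ S}, κ i, ptrace κ S M aS aS = ∑ x, M x x :=
  (sum_glue S (fun x => M x x)).symm

lemma trB_kron (ψ : Idx κ1 → ℂ) (β : Matrix (Idx κ2) (Idx κ2) ℂ)
    (hb : ∑ y, β y y = 1) : trB (kronProd (pureState ψ) β) = pureState ψ := by
  funext a a'
  show (∑ b, kronProd (pureState ψ) β (pairD a b) (pairD a' b)) = _
  simp only [kronProd_pairD, ← Finset.mul_sum, hb, mul_one]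

end Aux

section Aux2
open Matrix in
section
open scoped Matrix

variable {ι : Type} [Fintype ι] [DecidableEq ι] {κ1 κ2 : ι → Type}
  [∀ i, Fintype (κ1 i)] [∀ i, Fintype (κ2 i)]

open Classical in
/-- v ⊗ (delta at b) -/
noncomputable def embB (v : Idx κ1 → ℂ) (b : Idx κ2) :
    Idx (fun i => κ1 i × κ2 i) → ℂ :=
  fun p => v (fun i => (p i).1) * (if (fun i => (p i).2) = b then 1 else 0)

open Classical in
lemma embB_pairD (v : Idx κ1 → ℂ) (b : Idx κ2) (x : Idx κ1) (y : Idx κ2) :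
    embB v b (pairD x y) = v x * (if y = b then 1 else 0) := rfl

lemma dot_apply (M : Matrix (Idx fun i => κ1 i × κ2 i) (Idx fun i => κ1 i × κ2 i) ℂ)
    (u w : Idx (fun i => κ1 i × κ2 i) → ℂ) :
    star u ⬝ᵥ M *ᵥ w = ∑ x, ∑ y, ∑ x', ∑ y',
      star (u (pairD x y)) * M (pairD x y) (pairD x' y') * w (pairD x' y') := by
  simp only [dotProduct, Matrix.mulVec, Pi.star_apply]
  rw [sum_pairD (fun p => star (u p) * ∑ q, M p q * w q)]
  refine Finset.sum_congr rfl fun x _ => Finset.sum_congr rfl fun y _ => ?_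
  rw [Finset.mul_sum, sum_pairD (fun q => star (u (pairD x y)) * (M (pairD x y) q * w q))]
  refine Finset.sum_congr rfl fun x' _ => Finset.sum_congr rfl fun y' _ => by ring

lemma mulVec_apply (M : Matrix (Idx fun i => κ1 i × κ2 i) (Idx fun i => κ1 i × κ2 i) ℂ)
    (w : Idx (fun i => κ1 i × κ2 i) → ℂ) (p : Idx fun i => κ1 i × κ2 i) :
    (M *ᵥ w) p = ∑ x', ∑ y', M p (pairD x' y') * w (pairD x' y') := by
  simp only [Matrix.mulVec, dotProduct]
  exact sum_pairD _

lemma dot_trB_apply (σ : Matrix (Idx fun i => κ1 i × κ2 i) (Idx fun i => κ1 i × κ2 i) ℂ)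
    (v : Idx κ1 → ℂ) :
    star v ⬝ᵥ trB σ *ᵥ v = ∑ b, ∑ x, ∑ x',
      star (v x) * σ (pairD x b) (pairD x' b) * v x' := by
  simp only [dotProduct, Matrix.mulVec, trB, Pi.star_apply]
  calc (∑ x, star (v x) * ∑ x', (∑ b, σ (pairD x b) (pairD x' b)) * v x')
      = ∑ x, ∑ x', ∑ b, star (v x) * σ (pairD x b) (pairD x' b) * v x' := by
        refine Finset.sum_congr rfl fun x _ => ?_
        rw [Finset.mul_sum]
        refine Finset.sum_congr rfl fun x' _ => ?_
        rw [Finset.sum_mul, Finset.mul_sum]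
        exact Finset.sum_congr rfl fun b _ => by ring
    _ = ∑ b, ∑ x, ∑ x', star (v x) * σ (pairD x b) (pairD x' b) * v x' := by
        rw [show (∑ x, ∑ x', ∑ b, star (v x) * σ (pairD x b) (pairD x' b) * v x')
            = ∑ x, ∑ b, ∑ x', star (v x) * σ (pairD x b) (pairD x' b) * v x'
          from Finset.sum_congr rfl fun x _ => Finset.sum_comm, Finset.sum_comm]

open Classical in
lemma dot_embB (σ : Matrix (Idx fun i => κ1 i × κ2 i) (Idx fun i => κ1 i × κ2 i) ℂ)
    (v w : Idx κ1 → ℂ) (b b' : Idx κ2) :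
    star (embB v b) ⬝ᵥ σ *ᵥ embB w b' = ∑ x, ∑ x',
      star (v x) * σ (pairD x b) (pairD x' b') * w x' := by
  rw [dot_apply]
  simp only [embB_pairD, star_mul', apply_ite (star : ℂ → ℂ), star_one, star_zero, ite_mul, mul_ite,
    mul_one, mul_zero, zero_mul, Finset.sum_ite_irrel, Finset.sum_const_zero, Finset.sum_ite_eq', Finset.mem_univ, if_true]

lemma trB_isDensity (σ : Matrix (Idx fun i => κ1 i × κ2 i) (Idx fun i => κ1 i × κ2 i) ℂ)
    (hσ : IsDensity σ) : IsDensity (trB σ) := by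
  classical
  obtain ⟨hH, hPos⟩ := Matrix.posSemidef_iff_dotProduct_mulVec.mp hσ.1
  have hTr := hσ.2
  refine ⟨Matrix.posSemidef_iff_dotProduct_mulVec.mpr ⟨?_, ?_⟩, ?_⟩
  · funext a a'
    simp only [Matrix.conjTranspose_apply, trB, star_sum]
    refine Finset.sum_congr rfl fun b _ => ?_
    have := congrFun (congrFun hH (pairD a b)) (pairD a' b)
    simpa [Matrix.conjTranspose_apply] using this
  · intro v
    rw [dot_trB_apply]
    refine Finset.sum_nonneg fun b _ => ?_
    have := hPos (embB v b)
    rwa [dot_embB] at this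
  · have : (trB σ).trace = σ.trace := by
      simp only [Matrix.trace, Matrix.diag, trB]
      exact (sum_pairD (fun p => σ p p)).symm
    rw [this, hTr]

end
end Aux2

section Aux3
open Matrix
open scoped Matrix

variable {ι : Type} [Fintype ι] [DecidableEq ι] {κ1 κ2 : ι → Type}
  [∀ i, Fintype (κ1 i)] [∀ i, Fintype (κ2 i)]

/-- v ⊗ w -/
def embD (v : Idx κ1 → ℂ) (w : Idx κ2 → ℂ) :
    Idx (fun i => κ1 i × κ2 i) → ℂ :=
  fun p => v (fun i => (p i).1) * w (fun i => (p i).2)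

lemma embD_pairD (v : Idx κ1 → ℂ) (w : Idx κ2 → ℂ) (x : Idx κ1) (y : Idx κ2) :
    embD v w (pairD x y) = v x * w y := rfl

/-- the conditional state on the B side -/
noncomputable def tauMat (σ : Matrix (Idx fun i => κ1 i × κ2 i) (Idx fun i => κ1 i × κ2 i) ℂ)
    (ψ : Idx κ1 → ℂ) : Matrix (Idx κ2) (Idx κ2) ℂ :=
  fun b b' => ∑ x, ∑ x', star (ψ x) * σ (pairD x b) (pairD x' b') * ψ x'

lemma sum4_reorder {A B : Type} [Fintype A] [Fintype B] (f : A → B → A → B → ℂ) :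
    (∑ y : B, ∑ y' : B, ∑ x : A, ∑ x' : A, f x y x' y')
      = ∑ x, ∑ y, ∑ x', ∑ y', f x y x' y' :=
  calc (∑ y : B, ∑ y' : B, ∑ x : A, ∑ x' : A, f x y x' y')
      = ∑ y : B, ∑ x : A, ∑ y' : B, ∑ x' : A, f x y x' y' :=
        Finset.sum_congr rfl fun _ _ => Finset.sum_comm
    _ = ∑ x : A, ∑ y : B, ∑ y' : B, ∑ x' : A, f x y x' y' := Finset.sum_comm
    _ = ∑ x, ∑ y, ∑ x', ∑ y', f x y x' y' :=
        Finset.sum_congr rfl fun _ _ => Finset.sum_congr rfl fun _ _ => Finset.sum_comm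

lemma dot_tau (σ : Matrix (Idx fun i => κ1 i × κ2 i) (Idx fun i => κ1 i × κ2 i) ℂ)
    (ψ : Idx κ1 → ℂ) (w : Idx κ2 → ℂ) :
    star w ⬝ᵥ (tauMat σ ψ) *ᵥ w = star (embD ψ w) ⬝ᵥ σ *ᵥ embD ψ w := by
  rw [dot_apply]
  simp only [embD_pairD]
  calc star w ⬝ᵥ (tauMat σ ψ) *ᵥ w
      = ∑ y, ∑ y', ∑ x, ∑ x',
          star (ψ x * w y) * σ (pairD x y) (pairD x' y') * (ψ x' * w y') := by
        simp only [dotProduct, Matrix.mulVec, tauMat, Pi.star_apply]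
        refine Finset.sum_congr rfl fun y _ => ?_
        rw [Finset.mul_sum]
        refine Finset.sum_congr rfl fun y' _ => ?_
        rw [Finset.sum_mul, Finset.mul_sum]
        refine Finset.sum_congr rfl fun x _ => ?_
        rw [Finset.sum_mul, Finset.mul_sum]
        refine Finset.sum_congr rfl fun x' _ => by
          simp only [star_mul']; ring
    _ = ∑ x, ∑ y, ∑ x', ∑ y',
          star (ψ x * w y) * σ (pairD x y) (pairD x' y') * (ψ x' * w y') :=
        sum4_reorder _

lemma tau_hermitian (σ : Matrix (Idx fun i => κ1 i × κ2 i) (Idx fun i => κ1 i × κ2 i) ℂ)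
    (hH : σ.IsHermitian) (ψ : Idx κ1 → ℂ) : (tauMat σ ψ).IsHermitian := by
  funext b b'
  simp only [Matrix.conjTranspose_apply, tauMat, star_sum]
  rw [Finset.sum_comm]
  refine Finset.sum_congr rfl fun x _ => Finset.sum_congr rfl fun x' _ => ?_
  have h := congrFun (congrFun hH (pairD x b)) (pairD x' b')
  rw [Matrix.conjTranspose_apply] at h
  simp only [star_mul', star_star]
  rw [← h]
  ring

/-- factorization of a PSD matrix with pure B-trace -/
lemma factor (σ : Matrix (Idx fun i => κ1 i × κ2 i) (Idx fun i => κ1 i × κ2 i) ℂ)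
    (hPSD : σ.PosSemidef) (ψ : Idx κ1 → ℂ)
    (hψ : ∑ a, ψ a * star (ψ a) = 1)
    (htrB : trB σ = pureState ψ) :
    σ = kronProd (pureState ψ) (tauMat σ ψ) := by
  classical
  set φ : Idx κ1 → Idx κ1 → ℂ :=
    fun a x => (if x = a then 1 else 0) - star (ψ a) * ψ x with hφ
  have hψ' : ∑ x, star (ψ x) * ψ x = 1 := by
    rw [← hψ]; exact Finset.sum_congr rfl fun x _ => mul_comm _ _
  have hzero : ∀ a b, σ *ᵥ embB (φ a) b = 0 := by
    intro a b
    rw [← hPSD.dotProduct_mulVec_zero_iff]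
    have hsum : ∑ b', star (embB (φ a) b') ⬝ᵥ σ *ᵥ embB (φ a) b' = 0 := by
      have e1 : (∑ b', star (embB (φ a) b') ⬝ᵥ σ *ᵥ embB (φ a) b')
          = star (φ a) ⬝ᵥ trB σ *ᵥ (φ a) := by
        rw [dot_trB_apply]
        exact Finset.sum_congr rfl fun b' _ => dot_embB σ (φ a) (φ a) b' b'
      rw [e1, htrB]
      have ht : ∑ x, star (ψ x) * φ a x = 0 := by
        simp only [hφ, mul_sub, Finset.sum_sub_distrib, mul_ite, mul_one, mul_zero,
          Finset.sum_ite_eq', Finset.mem_univ, if_true]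
        have : ∑ x, star (ψ x) * (star (ψ a) * ψ x)
            = star (ψ a) * ∑ x, star (ψ x) * ψ x := by
          rw [Finset.mul_sum]
          exact Finset.sum_congr rfl fun x _ => by ring
        rw [this, hψ', mul_one, sub_self]
      have : star (φ a) ⬝ᵥ (pureState ψ) *ᵥ (φ a)
          = (∑ x, star (φ a x) * ψ x) * ∑ x', star (ψ x') * φ a x' := by
        rw [Finset.sum_mul]
        simp only [dotProduct, Matrix.mulVec, pureState, Pi.star_apply]
        refine Finset.sum_congr rfl fun x _ => ?_
        rw [Finset.mul_sum, Finset.mul_sum]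
        refine Finset.sum_congr rfl fun x' _ => by ring
      rw [this, ht, mul_zero]
    exact (Finset.sum_eq_zero_iff_of_nonneg
      (fun b' _ => hPSD.dotProduct_mulVec_nonneg (embB (φ a) b'))).mp hsum b (Finset.mem_univ b)
  have hC : ∀ (p : Idx fun i => κ1 i × κ2 i) (a : Idx κ1) (b : Idx κ2),
      σ p (pairD a b) = star (ψ a) * ∑ x', σ p (pairD x' b) * ψ x' := by
    intro p a b
    have h0 := congrFun (hzero a b) p
    rw [_root_.mulVec_apply] at h0
    simp only [embB_pairD, mul_ite, mul_one, mul_zero, Finset.sum_ite_eq',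
      Finset.mem_univ, if_true, Pi.zero_apply] at h0
    simp only [hφ, mul_sub, Finset.sum_sub_distrib, mul_ite, mul_one, mul_zero,
      Finset.sum_ite_eq', Finset.mem_univ, if_true] at h0
    have h1 : ∑ x', σ p (pairD x' b) * (star (ψ a) * ψ x')
        = star (ψ a) * ∑ x', σ p (pairD x' b) * ψ x' := by
      rw [Finset.mul_sum]
      exact Finset.sum_congr rfl fun x' _ => by ring
    rw [h1] at h0
    exact sub_eq_zero.mp h0
  have hR : ∀ (a : Idx κ1) (b : Idx κ2) (q : Idx fun i => κ1 i × κ2 i),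
      σ (pairD a b) q = ψ a * ∑ x, star (ψ x) * σ (pairD x b) q := by
    intro a b q
    have h1 : σ (pairD a b) q = star (σ q (pairD a b)) := by
      conv_lhs => rw [← hPSD.1]
      rw [Matrix.conjTranspose_apply]
    rw [h1, hC q a b, star_mul', star_star, star_sum]
    congr 1
    refine Finset.sum_congr rfl fun x _ => ?_
    rw [star_mul']
    have h2 : star (σ q (pairD x b)) = σ (pairD x b) q := by
      conv_rhs => rw [← hPSD.1]
      rw [Matrix.conjTranspose_apply]
    rw [h2]
    ring
  funext p q
  show σ p q = pureState ψ (fun i => (p i).1) (fun i => (q i).1)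
      * tauMat σ ψ (fun i => (p i).2) (fun i => (q i).2)
  have key : σ (pairD (fun i => (p i).1) (fun i => (p i).2))
      (pairD (fun i => (q i).1) (fun i => (q i).2))
      = pureState ψ (fun i => (p i).1) (fun i => (q i).1)
        * tauMat σ ψ (fun i => (p i).2) (fun i => (q i).2) := by
    set a := fun i => (p i).1
    set b := fun i => (p i).2
    set a' := fun i => (q i).1
    set b' := fun i => (q i).2
    rw [hR a b (pairD a' b')]
    have h3 : ∀ x, star (ψ x) * σ (pairD x b) (pairD a' b')
        = star (ψ a') * ∑ x', star (ψ x) * σ (pairD x b) (pairD x' b') * ψ x' := by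
      intro x
      rw [hC (pairD x b) a' b', Finset.mul_sum, Finset.mul_sum, Finset.mul_sum]
      exact Finset.sum_congr rfl fun x' _ => by ring
    simp only [h3]
    rw [← Finset.mul_sum, pureState, tauMat]
    ring
  exact key

end Aux3

theorem kronecker_additivity_pure_factor {n : ℕ}
    (κA κB : Fin n → Type) [∀ i, Fintype (κA i)] [∀ i, Fintype (κB i)] (k : ℕ)
    (ψ : Idx κA → ℂ) (hψ : ∑ a, ψ a * star (ψ a) = 1)
    (hαUDA : IsUDA κA k (pureState ψ))
    (β : Matrix (Idx κB) (Idx κB) ℂ) (hβ : IsDensity β)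
    (hβUDA : IsUDA κB k β) :
    IsUDA (fun i => κA i × κB i) k (kronProd (pureState ψ) β) := by
  intro σ hσ hm
  classical
  have hβtr : ∑ y, β y y = 1 := by simpa [Matrix.trace, Matrix.diag] using hβ.2
  have htrBk : trB (kronProd (pureState ψ) β) = pureState ψ := trB_kron ψ β hβtr
  have h1 : ∀ S : Finset (Fin n), S.card = k →
      ptrace κA S (trB σ) = ptrace κA S (pureState ψ) := by
    intro S hS
    funext aS a'S
    conv_rhs => rw [← htrBk]
    rw [ptrace_trB, ptrace_trB, hm S hS]
  have h2 : trB σ = pureState ψ := hαUDA (trB σ) (trB_isDensity σ hσ) h1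
  have hfact : σ = kronProd (pureState ψ) (tauMat σ ψ) := factor σ hσ.1 ψ hψ h2
  have hτPSD : (tauMat σ ψ).PosSemidef :=
    Matrix.posSemidef_iff_dotProduct_mulVec.mpr
      ⟨tau_hermitian σ hσ.1.1 ψ, fun w => by rw [dot_tau]; exact hσ.1.dotProduct_mulVec_nonneg _⟩
  have hτtr : (tauMat σ ψ).trace = 1 := by
    have h4 : σ.trace = (tauMat σ ψ).trace := by
      simp only [Matrix.trace, Matrix.diag]
      calc ∑ p, σ p p = ∑ x, ∑ y, σ (pairD x y) (pairD x y) := sum_pairD _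
        _ = ∑ x, ∑ y, (ψ x * star (ψ x)) * tauMat σ ψ y y := by
            refine Finset.sum_congr rfl fun x _ => Finset.sum_congr rfl fun y _ => ?_
            conv_lhs => rw [hfact]
            rfl
        _ = (∑ x, ψ x * star (ψ x)) * ∑ y, tauMat σ ψ y y :=
            (Finset.sum_mul_sum _ _ _ _).symm
        _ = ∑ y, tauMat σ ψ y y := by rw [hψ, one_mul]
    rw [← h4]
    exact hσ.2
  have h3 : ∀ S : Finset (Fin n), S.card = k →
      ptrace κB S (tauMat σ ψ) = ptrace κB S β := by
    intro S hS
    have e1 : ptrace (fun i => κA i × κB i) S (kronProd (pureState ψ) (tauMat σ ψ))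
        = ptrace (fun i => κA i × κB i) S (kronProd (pureState ψ) β) := by
      rw [← hfact]; exact hm S hS
    funext bS b'S
    have e2 : ∀ aS a'S, ptrace κA S (pureState ψ) aS a'S * ptrace κB S (tauMat σ ψ) bS b'S
        = ptrace κA S (pureState ψ) aS a'S * ptrace κB S β bS b'S := by
      intro aS a'S
      rw [← kron_ptrace, ← kron_ptrace, e1]
    have e3 : (∑ aS : ∀ i : {i // i ∈ S}, κA i, ptrace κA S (pureState ψ) aS aS) = 1 := by
      rw [trace_ptrace]
      exact hψ
    calc ptrace κB S (tauMat σ ψ) bS b'S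
        = (∑ aS : ∀ i : {i // i ∈ S}, κA i, ptrace κA S (pureState ψ) aS aS)
            * ptrace κB S (tauMat σ ψ) bS b'S := by rw [e3, one_mul]
      _ = (∑ aS : ∀ i : {i // i ∈ S}, κA i, ptrace κA S (pureState ψ) aS aS)
            * ptrace κB S β bS b'S := by
          rw [Finset.sum_mul, Finset.sum_mul]
          exact Finset.sum_congr rfl fun aS _ => e2 aS aS
      _ = ptrace κB S β bS b'S := by rw [e3, one_mul]
  have h5 : tauMat σ ψ = β := hβUDA _ ⟨hτPSD, hτtr⟩ h3
  rw [hfact, h5]
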